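/- Let A be the complex algebra with underlying vector space ℂ × ℂ, basis {e₁, e₂} where e₁ = (1,0) and e₂ = (0,1), and bilinear product determined by e₁e₁ = e₁, e₂e₂ = e₁ + e₂, and e₁e₂ = e₂e₁ = 0. Then Ann(A) = 0 and A is not semisimple; in particular, the existence of a weak-division basis together with zero annihilator does not imply semisimplicity for arbitrary algebras. -/

import Mathlib

/-!  Nonassociative algebras as vector spaces with a bilinear product. -/

variable {K V : Type*} [Field K] [AddCommGroup V] [Module K V]

/-- `I` is a (two-sided) ideal of the algebra `(V, mul)`. -/
def IsIdeal (mul : V →ₗ[K] V →ₗ[K] V) (I : Submodule K V) : Prop :=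
  ∀ a : V, ∀ x ∈ I, mul a x ∈ I ∧ mul x a ∈ I

/-- The ideal of `(V, mul)` generated by an element `c`. -/
def idealGen (mul : V →ₗ[K] V →ₗ[K] V) (c : V) : Submodule K V :=
  sInf {I : Submodule K V | IsIdeal mul I ∧ c ∈ I}

/-- The annihilator `{x : x·A = A·x = 0}` of `(V, mul)` is zero. -/
def HasZeroAnn (mul : V →ₗ[K] V →ₗ[K] V) : Prop :=
  ∀ x : V, (∀ a : V, mul x a = 0 ∧ mul a x = 0) → x = 0

/-- `(V, mul)` is a simple algebra: nonzero product, only trivial ideals. -/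
def IsSimpleAlgebra (mul : V →ₗ[K] V →ₗ[K] V) : Prop :=
  mul ≠ 0 ∧ ∀ I : Submodule K V, IsIdeal mul I → I = ⊥ ∨ I = ⊤

/-- `I` is an ideal of `(V, mul)` which is simple as an algebra (with the
restricted product): nonzero product, and its only ideals are `0` and `I`. -/
def IsSimpleIdeal (mul : V →ₗ[K] V →ₗ[K] V) (I : Submodule K V) : Prop :=
  IsIdeal mul I ∧ (∃ x ∈ I, ∃ y ∈ I, mul x y ≠ 0) ∧
    ∀ J : Submodule K V, J ≤ I →
      (∀ a ∈ I, ∀ x ∈ J, mul a x ∈ J ∧ mul x a ∈ J) → J = ⊥ ∨ J = I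

/-- `(V, mul)` is semisimple: it is the direct sum of a family of ideals,
each of which is simple as an algebra. -/
def IsSemisimple (mul : V →ₗ[K] V →ₗ[K] V) : Prop :=
  ∃ 𝒮 : Set (Submodule K V), (∀ I ∈ 𝒮, IsSimpleIdeal mul I) ∧
    sSupIndep 𝒮 ∧ sSup 𝒮 = ⊤

variable {ι : Type*}

/-- The set `S_{e_i}` attached to a basis element `e_i = b i`. -/
def Sset (mul : V →ₗ[K] V →ₗ[K] V) (b : Module.Basis ι K V) (i : ι) : Set V :=
  {v | ∃ j : ι, v = b j ∧ (mul (b i) (b j) ≠ 0 ∨ mul (b j) (b i) ≠ 0)}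

/-- `B` is an i-division basis. -/
def IsIDivisionBasis (mul : V →ₗ[K] V →ₗ[K] V) (b : Module.Basis ι K V) : Prop :=
  ∀ (i : ι) (x : V),
    (mul (b i) x ≠ 0 →
      b i ∈ idealGen mul (mul (b i) x) ∧ x ∈ idealGen mul (mul (b i) x)) ∧
    (mul x (b i) ≠ 0 →
      b i ∈ idealGen mul (mul x (b i)) ∧ x ∈ idealGen mul (mul x (b i)))

/-- `B` is a weak-division basis: the i-division condition is only required
for `x` in `M_{e_i}`, the span of `S_{e_i}`. -/
def IsWeakDivisionBasis (mul : V →ₗ[K] V →ₗ[K] V) (b : Module.Basis ι K V) : Prop :=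
  ∀ i : ι, ∀ x ∈ Submodule.span K (Sset mul b i),
    (mul (b i) x ≠ 0 →
      b i ∈ idealGen mul (mul (b i) x) ∧ x ∈ idealGen mul (mul (b i) x)) ∧
    (mul x (b i) ≠ 0 →
      b i ∈ idealGen mul (mul x (b i)) ∧ x ∈ idealGen mul (mul x (b i)))

/-- The set `P_{e_i}` attached to a basis element `e_i = b i`, where
`b.coord i` is the coordinate functional `p_{e_i}`. -/
def Pset (mul : V →ₗ[K] V →ₗ[K] V) (b : Module.Basis ι K V) (i : ι) : Set V :=
  {v | ∃ j : ι, v = b j ∧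
    ((∃ r : ι, b.coord i (mul (b j) (b r)) ≠ 0) ∨
     (∃ s : ι, b.coord i (mul (b s) (b j)) ≠ 0))}

/-- The set `P_{e_i}·P_{e_i}` of products of pairs of elements of `P_{e_i}`. -/
def PPset (mul : V →ₗ[K] V →ₗ[K] V) (b : Module.Basis ι K V) (i : ι) : Set V :=
  {v | ∃ x ∈ Pset mul b i, ∃ y ∈ Pset mul b i, v = mul x y}

/-- `B` is a semi-division basis. -/
def IsSemiDivisionBasis (mul : V →ₗ[K] V →ₗ[K] V) (b : Module.Basis ι K V) : Prop :=
  IsWeakDivisionBasis mul b ∧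
  ∀ i : ι, ∀ x ∈ PPset mul b i, ∀ e ∈ Sset mul b i,
    (mul x e ≠ 0 →
      e ∈ idealGen mul (mul x e) ∧ x ∈ idealGen mul (mul x e)) ∧
    (mul e x ≠ 0 →
      e ∈ idealGen mul (mul e x) ∧ x ∈ idealGen mul (mul e x))

/-- The complex algebra `A = ℂ × ℂ` whose bilinear product is determined on the
basis `e₁ = (1,0)`, `e₂ = (0,1)` by `e₁e₁ = e₁`, `e₂e₂ = e₁ + e₂`, `e₁e₂ = e₂e₁ = 0`
has zero annihilator and is not semisimple. -/
theorem example_zeroAnn_not_semisimple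
    (mul : (ℂ × ℂ) →ₗ[ℂ] (ℂ × ℂ) →ₗ[ℂ] (ℂ × ℂ))
    (h11 : mul (1, 0) (1, 0) = (1, 0))
    (h22 : mul (0, 1) (0, 1) = (1, 1))
    (h12 : mul (1, 0) (0, 1) = 0)
    (h21 : mul (0, 1) (1, 0) = 0) :
    HasZeroAnn mul ∧ ¬ IsSemisimple mul := by
  have key : ∀ a b c d : ℂ, mul (a, b) (c, d) = (a*c + b*d, b*d) := by
    intro a b c d
    have hx : ((a, b) : ℂ × ℂ) = a • (1, 0) + b • (0, 1) := by
      simp [Prod.ext_iff]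
    have hy : ((c, d) : ℂ × ℂ) = c • (1, 0) + d • (0, 1) := by
      simp [Prod.ext_iff]
    rw [hx, hy]
    simp only [map_add, map_smul, LinearMap.add_apply, LinearMap.smul_apply,
      h11, h22, h12, h21, smul_zero]
    simp [Prod.ext_iff]
    ring_nf
    constructor <;> trivial
  constructor
  · intro x hx
    obtain ⟨a, b⟩ := x
    have h1 := (hx (1, 0)).1
    have h2 := (hx (0, 1)).1
    rw [key] at h1 h2
    simp [Prod.ext_iff] at h1 h2
    simp [Prod.ext_iff, h1, h2]
  · rintro ⟨S, hsimp, hindep, hsup⟩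
    set L : Submodule ℂ (ℂ × ℂ) := Submodule.span ℂ {((1 : ℂ), (0 : ℂ))} with hL
    have hmemL : ∀ v : ℂ × ℂ, v ∈ L ↔ v.2 = 0 := by
      intro v
      constructor
      · intro hv
        rw [hL, Submodule.mem_span_singleton] at hv
        obtain ⟨c, hc⟩ := hv
        rw [← hc]
        simp
      · intro hv
        rw [hL, Submodule.mem_span_singleton]
        exact ⟨v.1, by simp [Prod.ext_iff, hv]⟩
    have hIL : ∀ I ∈ S, I ≤ L := by
      intro I hIS
      obtain ⟨hIdeal, _, hmin⟩ := hsimp I hIS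
      by_contra hnle
      -- there is x ∈ I with x.2 ≠ 0
      obtain ⟨x, hxI, hxL⟩ := Set.not_subset.mp hnle
      obtain ⟨a, b⟩ := x
      have hb : b ≠ 0 := fun h => hxL ((hmemL (a, b)).mpr h)
      -- (b, b) ∈ I
      have hbb : ((b, b) : ℂ × ℂ) ∈ I := by
        have := (hIdeal (0, 1) (a, b) hxI).1
        rwa [key, show (0 : ℂ) * a + 1 * b = b by ring, one_mul] at this
      -- (b, 0) ∈ I
      have hb0 : ((b, 0) : ℂ × ℂ) ∈ I := by
        have := (hIdeal (1, 0) (b, b) hbb).1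
        rwa [key, show (1 : ℂ) * b + 0 * b = b by ring, zero_mul] at this
      have he1 : ((1, 0) : ℂ × ℂ) ∈ I := by
        have := I.smul_mem b⁻¹ hb0
        rwa [show b⁻¹ • ((b, 0) : ℂ × ℂ) = (1, 0) by
          simp [Prod.ext_iff, inv_mul_cancel₀ hb]] at this
      have he2 : ((0, 1) : ℂ × ℂ) ∈ I := by
        have h2 := I.smul_mem b⁻¹ hbb
        have : (b⁻¹ • ((b, b) : ℂ × ℂ)) = (1, 1) := by
          simp [Prod.ext_iff, inv_mul_cancel₀ hb]
        rw [this] at h2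
        have := I.sub_mem h2 he1
        rwa [show ((1, 1) : ℂ × ℂ) - (1, 0) = (0, 1) by simp [Prod.ext_iff]] at this
      have hItop : I = ⊤ := by
        rw [eq_top_iff]
        intro v _
        obtain ⟨c, d⟩ := v
        have : ((c, d) : ℂ × ℂ) = c • (1, 0) + d • (0, 1) := by simp [Prod.ext_iff]
        rw [this]
        exact I.add_mem (I.smul_mem c he1) (I.smul_mem d he2)
      -- L is a nontrivial proper subideal of I = ⊤, contradiction
      have hLle : L ≤ I := hItop ▸ le_top
      have hLclosed : ∀ a ∈ I, ∀ x ∈ L, mul a x ∈ L ∧ mul x a ∈ L := by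
        intro a _ x hx
        obtain ⟨p, q⟩ := a
        obtain ⟨c, d⟩ := x
        have hd : d = 0 := (hmemL (c, d)).mp hx
        subst hd
        rw [key, key]
        constructor <;> rw [hmemL] <;> simp
      rcases hmin L hLle hLclosed with h | h
      · have : ((1, 0) : ℂ × ℂ) ∈ L := (hmemL _).mpr rfl
        rw [h] at this
        simp [Prod.ext_iff] at this
      · rw [h, hItop] at hmemL
        have := (hmemL (0, 1)).mp Submodule.mem_top
        simp at this
    have hsupL : sSup S ≤ L := sSup_le hIL
    rw [hsup] at hsupL
    have := (hmemL (0, 1)).mp (hsupL Submodule.mem_top)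
    simp at this
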